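/- If all entries p_{i,n} of the matrix P are nonnegative, then F is monotone nondecreasing on [0,1]; if all entries are strictly positive, then F is strictly increasing on [0,1]. -/

import Mathlib

open Finset Filter Topology MeasureTheory

noncomputable section

/-- `rowSum p n k = Σ_{i<k} p_{i,n}` (the numbers `β_{k,n}`). -/
def rowSum (p : ℕ → ℕ → ℝ) (n k : ℕ) : ℝ := ∑ i ∈ Finset.range k, p n i

/-- Index flip at even positions: `tw m f n i = f n i` for odd `n`, `f n (m n - i)` for even `n`. -/
def tw (m : ℕ → ℕ) (f : ℕ → ℕ → ℝ) (n i : ℕ) : ℝ :=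
  if Odd n then f n i else f n (m n - i)

/-- Tail value of the (nega-)expansion determined by `f` from position `k+1` on. -/
def negaShift (m : ℕ → ℕ) (f : ℕ → ℕ → ℝ) (d : ℕ → ℕ) (k : ℕ) : ℝ :=
  ∑' j : ℕ, tw m (rowSum f) (k + j + 1) (d (k + j + 1)) *
    ∏ t ∈ Finset.Icc (k + 1) (k + j), tw m f t (d t)

/-- The nega-expansion value: `negaVal m f d = β̃_{d₁,1} + Σ_{k≥2} β̃_{d_k,k} Π_{j<k} f̃_{d_j,j}`. -/
def negaVal (m : ℕ → ℕ) (f : ℕ → ℕ → ℝ) (d : ℕ → ℕ) : ℝ := negaShift m f d 0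

/-- A digit sequence for the alphabet sizes `m`. -/
def ValidDigits (m : ℕ → ℕ) (d : ℕ → ℕ) : Prop := ∀ n, d n ≤ m n


/-- Abstract tail value: `shval B a k = Σ_j B_{k+j+1} Π_{t=k+1}^{k+j} a_t`. -/
def shval (B a : ℕ → ℝ) (k : ℕ) : ℝ :=
  ∑' j : ℕ, B (k + j + 1) * ∏ t ∈ Finset.Icc (k + 1) (k + j), a t

/-- Admissibility of the coefficient pair. -/
def Adm (B a : ℕ → ℝ) : Prop := ∀ n, 0 ≤ B n ∧ 0 ≤ a n ∧ B n + a n ≤ 1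

variable {B a B' a' : ℕ → ℝ}

lemma shval_term_nonneg (h : Adm B a) (k j : ℕ) :
    0 ≤ B (k + j + 1) * ∏ t ∈ Finset.Icc (k + 1) (k + j), a t :=
  mul_nonneg (h _).1 (Finset.prod_nonneg fun t _ => (h t).2.1)

lemma shval_partial (h : Adm B a) (k : ℕ) : ∀ N,
    (∑ j ∈ Finset.range N, B (k + j + 1) * ∏ t ∈ Finset.Icc (k + 1) (k + j), a t) +
      ∏ t ∈ Finset.Icc (k + 1) (k + N), a t ≤ 1 := by
  intro N
  induction N with
  | zero => simp [Finset.Icc_eq_empty_of_lt (Nat.lt_succ_self k)]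
  | succ N ih =>
    rw [Finset.sum_range_succ]
    have hprod : ∏ t ∈ Finset.Icc (k + 1) (k + (N + 1)), a t
        = (∏ t ∈ Finset.Icc (k + 1) (k + N), a t) * a (k + N + 1) := by
      rw [show k + (N + 1) = (k + N) + 1 by ring, Finset.prod_Icc_succ_top (by omega)]
    have hnn : 0 ≤ ∏ t ∈ Finset.Icc (k + 1) (k + N), a t :=
      Finset.prod_nonneg fun t _ => (h t).2.1
    have : B (k + N + 1) * ∏ t ∈ Finset.Icc (k + 1) (k + N), a t +
        ∏ t ∈ Finset.Icc (k + 1) (k + (N + 1)), a t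
        ≤ ∏ t ∈ Finset.Icc (k + 1) (k + N), a t := by
      rw [hprod]
      nlinarith [(h (k + N + 1)).1, (h (k + N + 1)).2.1, (h (k + N + 1)).2.2]
    linarith
lemma shval_summable (h : Adm B a) (k : ℕ) :
    Summable (fun j => B (k + j + 1) * ∏ t ∈ Finset.Icc (k + 1) (k + j), a t) := by
  apply summable_of_sum_range_le (c := 1) (shval_term_nonneg h k)
  intro N
  have := shval_partial h k N
  have hnn : 0 ≤ ∏ t ∈ Finset.Icc (k + 1) (k + N), a t :=
    Finset.prod_nonneg fun t _ => (h t).2.1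
  linarith

lemma shval_nonneg (h : Adm B a) (k : ℕ) : 0 ≤ shval B a k :=
  tsum_nonneg (shval_term_nonneg h k)

lemma shval_le_one (h : Adm B a) (k : ℕ) : shval B a k ≤ 1 := by
  apply Summable.tsum_le_of_sum_range_le (shval_summable h k)
  intro N
  have := shval_partial h k N
  have hnn : 0 ≤ ∏ t ∈ Finset.Icc (k + 1) (k + N), a t :=
    Finset.prod_nonneg fun t _ => (h t).2.1
  linarith

lemma shval_rec (h : Adm B a) (k : ℕ) :
    shval B a k = B (k + 1) + a (k + 1) * shval B a (k + 1) := by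
  rw [shval, Summable.tsum_eq_zero_add (shval_summable h k)]
  congr 1
  · simp [Finset.Icc_eq_empty_of_lt (Nat.lt_succ_self k)]
  · rw [shval, ← tsum_mul_left]
    apply tsum_congr
    intro j
    have h1 : Finset.Icc (k + 1) (k + (j + 1)) = Finset.Ico (k + 1) (k + j + 2) := by
      ext x; simp; omega
    rw [h1, Finset.prod_eq_prod_Ico_succ_bot (by omega)]
    have h2 : Finset.Ico (k + 1 + 1) (k + j + 2) = Finset.Icc (k + 1 + 1) (k + 1 + j) := by
      ext x; simp; omega
    rw [h2]
    ring_nf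

lemma shval_congr (k : ℕ) (hag : ∀ t, k < t → B t = B' t ∧ a t = a' t) :
    shval B a k = shval B' a' k := by
  apply tsum_congr
  intro j
  rw [(hag (k + j + 1) (by omega)).1]
  congr 1
  exact Finset.prod_congr rfl fun t ht => (hag t (by simp at ht; omega)).2

lemma shval_eq_zero (k : ℕ) (hz : ∀ t, k < t → B t = 0) : shval B a k = 0 := by
  rw [shval]
  convert tsum_zero with j
  rw [hz (k + j + 1) (by omega), zero_mul]

lemma shval_eq_one (h : Adm B a) (k : ℕ) (hmax : ∀ t, k < t → B t + a t = 1)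
    (hprod : Tendsto (fun N => ∏ t ∈ Finset.Icc (k + 1) N, a t) atTop (𝓝 0)) :
    shval B a k = 1 := by
  have key : ∀ i, 1 - shval B a k =
      (∏ t ∈ Finset.Icc (k + 1) (k + i), a t) * (1 - shval B a (k + i)) := by
    intro i
    induction i with
    | zero => simp [Finset.Icc_eq_empty_of_lt (Nat.lt_succ_self k)]
    | succ i ih =>
      rw [ih, shval_rec h (k + i)]
      have hB : B (k + i + 1) = 1 - a (k + i + 1) := by
        have := hmax (k + i + 1) (by omega); linarith
      have : ∏ t ∈ Finset.Icc (k + 1) (k + (i + 1)), a t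
          = (∏ t ∈ Finset.Icc (k + 1) (k + i), a t) * a (k + i + 1) := by
        rw [show k + (i + 1) = (k + i) + 1 by ring, Finset.prod_Icc_succ_top (by omega)]
      rw [this, hB]
      have hs : k + (i + 1) = k + i + 1 := by ring
      rw [hs]
      ring
  have hb : ∀ i, |1 - shval B a k| ≤ ∏ t ∈ Finset.Icc (k + 1) (k + i), a t := by
    intro i
    rw [key i, abs_mul]
    have h1 : |∏ t ∈ Finset.Icc (k + 1) (k + i), a t|
        = ∏ t ∈ Finset.Icc (k + 1) (k + i), a t :=
      abs_of_nonneg (Finset.prod_nonneg fun t _ => (h t).2.1)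
    rw [h1]
    have h2 : |1 - shval B a (k + i)| ≤ 1 := by
      rw [abs_le]
      constructor
      · linarith [shval_le_one h (k + i)]
      · linarith [shval_nonneg h (k + i)]
    nlinarith [Finset.prod_nonneg (fun t (_ : t ∈ Finset.Icc (k+1) (k+i)) => (h t).2.1)]
  have hlim : Tendsto (fun i => ∏ t ∈ Finset.Icc (k + 1) (k + i), a t) atTop (𝓝 0) := by
    have := hprod.comp (tendsto_add_atTop_nat k)
    simpa [Function.comp_def, Nat.add_comm] using this
  have : |1 - shval B a k| ≤ 0 := ge_of_tendsto' hlim hb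
  have := abs_nonneg (1 - shval B a k)
  have h0 : |1 - shval B a k| = 0 := le_antisymm ‹_› ‹_›
  rw [abs_eq_zero] at h0
  linarith

lemma shval_lt_one (h : Adm B a) (hpos : ∀ t, 0 < a t) {k t : ℕ} (hk : k < t)
    (hlt : B t + a t < 1) : shval B a k < 1 := by
  have aux : ∀ i k, k + i + 1 = t → shval B a k < 1 := by
    intro i
    induction i with
    | zero =>
      intro k hk1
      rw [shval_rec h k, hk1]
      nlinarith [shval_le_one h t, shval_nonneg h t, (h t).2.1, hpos t]
    | succ i ih =>
      intro k hk1
      rw [shval_rec h k]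
      have := ih (k + 1) (by omega)
      nlinarith [hpos (k + 1), (h (k + 1)).2.2, (h (k + 1)).1]
  exact aux (t - k - 1) k (by omega)

lemma shval_pos (h : Adm B a) (hpos : ∀ t, 0 < a t) {k t : ℕ} (hk : k < t)
    (hBt : 0 < B t) : 0 < shval B a k := by
  have aux : ∀ i k, k + i + 1 = t → 0 < shval B a k := by
    intro i
    induction i with
    | zero =>
      intro k hk1
      rw [shval_rec h k, hk1]
      nlinarith [shval_nonneg h t, (h t).2.1]
    | succ i ih =>
      intro k hk1
      rw [shval_rec h k]
      have := ih (k + 1) (by omega)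
      nlinarith [hpos (k + 1), (h (k + 1)).1]
  exact aux (t - k - 1) k (by omega)

lemma shval_le (h : Adm B a) (h' : Adm B' a') {k n : ℕ} (hk : k < n)
    (hag : ∀ t, k < t → t < n → B t = B' t ∧ a t = a' t)
    (hn : B n + a n * shval B a n ≤ B' n + a' n * shval B' a' n) :
    shval B a k ≤ shval B' a' k := by
  have aux : ∀ i k, k + i + 1 = n → (∀ t, k < t → t < n → B t = B' t ∧ a t = a' t) →
      shval B a k ≤ shval B' a' k := by
    intro i
    induction i with
    | zero =>
      intro k hk1 _
      rw [shval_rec h k, shval_rec h' k, hk1]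
      exact hn
    | succ i ih =>
      intro k hk1 hag
      rw [shval_rec h k, shval_rec h' k]
      obtain ⟨hB1, ha1⟩ := hag (k + 1) (by omega) (by omega)
      have hrec := ih (k + 1) (by omega) (fun t ht1 ht2 => hag t (by omega) ht2)
      rw [← hB1, ← ha1]
      have := (h (k + 1)).2.1
      nlinarith
  exact aux (n - k - 1) k (by omega) hag

lemma shval_lt (h : Adm B a) (h' : Adm B' a') (hpos : ∀ t, 0 < a t) {k n : ℕ} (hk : k < n)
    (hag : ∀ t, k < t → t < n → B t = B' t ∧ a t = a' t)
    (hn : B n + a n * shval B a n < B' n + a' n * shval B' a' n) :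
    shval B a k < shval B' a' k := by
  have aux : ∀ i k, k + i + 1 = n → (∀ t, k < t → t < n → B t = B' t ∧ a t = a' t) →
      shval B a k < shval B' a' k := by
    intro i
    induction i with
    | zero =>
      intro k hk1 _
      rw [shval_rec h k, shval_rec h' k, hk1]
      exact hn
    | succ i ih =>
      intro k hk1 hag
      rw [shval_rec h k, shval_rec h' k]
      obtain ⟨hB1, ha1⟩ := hag (k + 1) (by omega) (by omega)
      have hrec := ih (k + 1) (by omega) (fun t ht1 ht2 => hag t (by omega) ht2)
      rw [← hB1, ← ha1]
      have := hpos (k + 1)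
      nlinarith
  exact aux (n - k - 1) k (by omega) hag

/-- The twisted digit sequence. -/
def td (m d : ℕ → ℕ) (n : ℕ) : ℕ := if Odd n then d n else m n - d n

lemma td_valid {m d : ℕ → ℕ} (hd : ValidDigits m d) : ValidDigits m (td m d) := by
  intro n
  unfold td
  split
  · exact hd n
  · exact Nat.sub_le _ _

lemma tw_eq_td (m : ℕ → ℕ) (g : ℕ → ℕ → ℝ) (d : ℕ → ℕ) (n : ℕ) :
    tw m g n (d n) = g n (td m d n) := by
  unfold tw td
  split <;> rfl

lemma negaShift_eq_shval (m : ℕ → ℕ) (f : ℕ → ℕ → ℝ) (d : ℕ → ℕ) (k : ℕ) :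
    negaShift m f d k
      = shval (fun n => rowSum f n (td m d n)) (fun n => f n (td m d n)) k := by
  apply tsum_congr
  intro j
  rw [tw_eq_td]
  congr 1
  exact Finset.prod_congr rfl fun t _ => tw_eq_td m f d t

lemma negaVal_eq_shval (m : ℕ → ℕ) (f : ℕ → ℕ → ℝ) (d : ℕ → ℕ) :
    negaVal m f d
      = shval (fun n => rowSum f n (td m d n)) (fun n => f n (td m d n)) 0 :=
  negaShift_eq_shval m f d 0

lemma rowSum_succ (f : ℕ → ℕ → ℝ) (n k : ℕ) :
    rowSum f n (k + 1) = rowSum f n k + f n k :=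
  Finset.sum_range_succ _ _

lemma rowSum_le_rowSum {f : ℕ → ℕ → ℝ} {m n k1 k2 : ℕ}
    (hf : ∀ i, i ≤ m → 0 ≤ f n i) (h12 : k1 ≤ k2) (h2 : k2 ≤ m + 1) :
    rowSum f n k1 ≤ rowSum f n k2 := by
  apply Finset.sum_le_sum_of_subset_of_nonneg (Finset.range_subset_range.mpr h12)
  intro i hi _
  exact hf i (by simp at hi; omega)

lemma rowSum_lt_rowSum {f : ℕ → ℕ → ℝ} {m n k1 k2 : ℕ}
    (hf : ∀ i, i ≤ m → 0 < f n i) (h12 : k1 < k2) (h2 : k2 ≤ m + 1) :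
    rowSum f n k1 < rowSum f n k2 := by
  apply Finset.sum_lt_sum_of_subset (Finset.range_subset_range.mpr h12.le)
    (i := k1) (by simp; omega) (by simp)
  · exact hf k1 (by omega)
  · intro j hj _
    exact (hf j (by simp at hj; omega)).le

lemma rowSum_nonneg {f : ℕ → ℕ → ℝ} {m n k : ℕ}
    (hf : ∀ i, i ≤ m → 0 ≤ f n i) (h : k ≤ m + 1) : 0 ≤ rowSum f n k :=
  Finset.sum_nonneg fun i hi => hf i (by simp at hi; omega)

/-- Admissibility of the coefficients extracted from a matrix and valid digit seq. -/
lemma adm_of (m : ℕ → ℕ) (f : ℕ → ℕ → ℝ) (c : ℕ → ℕ)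
    (hf : ∀ n i, i ≤ m n → 0 ≤ f n i)
    (hf2 : ∀ n, ∑ i ∈ Finset.range (m n + 1), f n i = 1)
    (hc : ∀ n, c n ≤ m n) :
    Adm (fun n => rowSum f n (c n)) (fun n => f n (c n)) := by
  intro n
  refine ⟨rowSum_nonneg (fun i => hf n i) (by have := hc n; omega), hf n (c n) (hc n), ?_⟩
  rw [← rowSum_succ]
  calc rowSum f n (c n + 1) ≤ rowSum f n (m n + 1) :=
        rowSum_le_rowSum (fun i => hf n i) (by have := hc n; omega) (by omega)
    _ = 1 := hf2 n

lemma prod_shift_tendsto (a : ℕ → ℝ) (hpos : ∀ t, 0 < a t)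
    (h : Tendsto (fun N => ∏ j ∈ Finset.Icc 1 N, a j) atTop (𝓝 0)) (k : ℕ) :
    Tendsto (fun N => ∏ t ∈ Finset.Icc (k + 1) N, a t) atTop (𝓝 0) := by
  have hC : 0 < ∏ t ∈ Finset.Icc 1 k, a t := Finset.prod_pos fun t _ => hpos t
  have hev : ∀ᶠ N in atTop, (∏ j ∈ Finset.Icc 1 N, a j) / (∏ t ∈ Finset.Icc 1 k, a t)
      = ∏ t ∈ Finset.Icc (k + 1) N, a t := by
    filter_upwards [eventually_ge_atTop k] with N hN
    have hsplit : (∏ t ∈ Finset.Icc 1 k, a t) * ∏ t ∈ Finset.Icc (k + 1) N, a t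
        = ∏ j ∈ Finset.Icc 1 N, a j := by
      have e1 : Finset.Icc 1 k = Finset.Ioc 0 k := by ext x; simp; omega
      have e2 : Finset.Icc (k + 1) N = Finset.Ioc k N := by ext x; simp
      have e3 : Finset.Icc 1 N = Finset.Ioc 0 N := by ext x; simp; omega
      rw [e1, e2, e3]
      exact Finset.prod_Ioc_consecutive a (Nat.zero_le k) hN
    field_simp
    linarith [hsplit]
  have : Tendsto (fun N => (∏ j ∈ Finset.Icc 1 N, a j) / (∏ t ∈ Finset.Icc 1 k, a t))
      atTop (𝓝 0) := by
    simpa using h.div_const (∏ t ∈ Finset.Icc 1 k, a t)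
  exact Tendsto.congr' hev this

lemma chain_le {f : ℕ → ℕ → ℝ} {mn n i i' : ℕ} (hf : ∀ j, j ≤ mn → 0 ≤ f n j)
    (hii : i < i') (hi' : i' ≤ mn) {S S' : ℝ} (hS0 : 0 ≤ S) (hS1 : S ≤ 1) (hS' : 0 ≤ S') :
    rowSum f n i + f n i * S ≤ rowSum f n i' + f n i' * S' := by
  have h1 : rowSum f n i + f n i * S ≤ rowSum f n (i + 1) := by
    rw [rowSum_succ]
    nlinarith [hf i (by omega)]
  have h2 : rowSum f n (i + 1) ≤ rowSum f n i' := rowSum_le_rowSum hf hii (by omega)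
  have h3 : 0 ≤ f n i' * S' := mul_nonneg (hf i' hi') hS'
  linarith

lemma key_le (m : ℕ → ℕ) (q p : ℕ → ℕ → ℝ)
    (hq1 : ∀ n i, i ≤ m n → 0 < q n i)
    (hp2 : ∀ n, ∑ i ∈ Finset.range (m n + 1), p n i = 1)
    (hq2 : ∀ n, ∑ i ∈ Finset.range (m n + 1), q n i = 1)
    (hpnn : ∀ n i, i ≤ m n → 0 ≤ p n i)
    {d e : ℕ → ℕ} (hd : ValidDigits m d) (he : ValidDigits m e)
    (hlt : negaVal m q d < negaVal m q e) :
    negaVal m p d ≤ negaVal m p e := by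
  classical
  rw [negaVal_eq_shval, negaVal_eq_shval] at hlt
  rw [negaVal_eq_shval, negaVal_eq_shval]
  set c := td m d with hcdef
  set c' := td m e with hcdef'
  have hcv : ∀ n, c n ≤ m n := td_valid hd
  have hcv' : ∀ n, c' n ≤ m n := td_valid he
  have Hq : Adm (fun n => rowSum q n (c n)) (fun n => q n (c n)) :=
    adm_of m q c (fun n i hi => (hq1 n i hi).le) hq2 hcv
  have Hq' : Adm (fun n => rowSum q n (c' n)) (fun n => q n (c' n)) :=
    adm_of m q c' (fun n i hi => (hq1 n i hi).le) hq2 hcv'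
  have Hp : Adm (fun n => rowSum p n (c n)) (fun n => p n (c n)) :=
    adm_of m p c hpnn hp2 hcv
  have Hp' : Adm (fun n => rowSum p n (c' n)) (fun n => p n (c' n)) :=
    adm_of m p c' hpnn hp2 hcv'
  have hne : ∃ t, 1 ≤ t ∧ c t ≠ c' t := by
    by_contra hcon
    push_neg at hcon
    exact absurd (shval_congr 0 (fun t ht => by rw [hcon t ht]; exact ⟨rfl, rfl⟩)) hlt.ne
  obtain ⟨n, ⟨hn1, hnne⟩, hmin0⟩ : ∃ n, (1 ≤ n ∧ c n ≠ c' n) ∧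
      ∀ t, t < n → ¬(1 ≤ t ∧ c t ≠ c' t) :=
    ⟨Nat.find hne, Nat.find_spec hne, fun t ht => Nat.find_min hne ht⟩
  have hmin : ∀ t, t < n → 1 ≤ t → c t = c' t := by
    intro t ht h1
    have := hmin0 t ht
    push_neg at this
    exact this h1
  have hag : ∀ t, 0 < t → t < n →
      rowSum q t (c t) = rowSum q t (c' t) ∧ q t (c t) = q t (c' t) := by
    intro t ht htn
    rw [hmin t htn ht]
    exact ⟨rfl, rfl⟩
  have hagp : ∀ t, 0 < t → t < n →
      rowSum p t (c t) = rowSum p t (c' t) ∧ p t (c t) = p t (c' t) := by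
    intro t ht htn
    rw [hmin t htn ht]
    exact ⟨rfl, rfl⟩
  have horder : c n < c' n := by
    by_contra hcon
    push_neg at hcon
    have h2 : c' n < c n := lt_of_le_of_ne hcon (fun h => hnne h.symm)
    have hchain : rowSum q n (c' n) + q n (c' n) *
        shval (fun t => rowSum q t (c' t)) (fun t => q t (c' t)) n
        ≤ rowSum q n (c n) + q n (c n) *
        shval (fun t => rowSum q t (c t)) (fun t => q t (c t)) n :=
      chain_le (fun j hj => (hq1 n j hj).le) h2 (hcv n)
        (shval_nonneg Hq' n) (shval_le_one Hq' n) (shval_nonneg Hq n)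
    exact absurd (shval_le Hq' Hq hn1
      (fun t ht htn => ⟨(hag t ht htn).1.symm, (hag t ht htn).2.symm⟩)
      hchain) (not_le.mpr hlt)
  exact shval_le Hp Hp' hn1 hagp
    (chain_le (hpnn n) horder (hcv' n)
      (shval_nonneg Hp n) (shval_le_one Hp n) (shval_nonneg Hp' n))

lemma key_lt (m : ℕ → ℕ) (q p : ℕ → ℕ → ℝ)
    (hq1 : ∀ n i, i ≤ m n → 0 < q n i)
    (hq2 : ∀ n, ∑ i ∈ Finset.range (m n + 1), q n i = 1)
    (hq4 : ∀ d, ValidDigits m d →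
      Tendsto (fun N => ∏ j ∈ Finset.Icc 1 N, q j (d j)) atTop (𝓝 0))
    (hp2 : ∀ n, ∑ i ∈ Finset.range (m n + 1), p n i = 1)
    (hp3 : ∀ n k, 1 ≤ k → k ≤ m n → rowSum p n k ∈ Set.Ioo (0 : ℝ) 1)
    (hppos : ∀ n i, i ≤ m n → 0 < p n i)
    {d e : ℕ → ℕ} (hd : ValidDigits m d) (he : ValidDigits m e)
    (hlt : negaVal m q d < negaVal m q e) :
    negaVal m p d < negaVal m p e := by
  classical
  have hpnn : ∀ n i, i ≤ m n → 0 ≤ p n i := fun n i hi => (hppos n i hi).le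
  rw [negaVal_eq_shval, negaVal_eq_shval] at hlt
  rw [negaVal_eq_shval, negaVal_eq_shval]
  set c := td m d with hcdef
  set c' := td m e with hcdef'
  have hcv : ∀ n, c n ≤ m n := td_valid hd
  have hcv' : ∀ n, c' n ≤ m n := td_valid he
  have Hq : Adm (fun n => rowSum q n (c n)) (fun n => q n (c n)) :=
    adm_of m q c (fun n i hi => (hq1 n i hi).le) hq2 hcv
  have Hq' : Adm (fun n => rowSum q n (c' n)) (fun n => q n (c' n)) :=
    adm_of m q c' (fun n i hi => (hq1 n i hi).le) hq2 hcv'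
  have Hp : Adm (fun n => rowSum p n (c n)) (fun n => p n (c n)) :=
    adm_of m p c hpnn hp2 hcv
  have Hp' : Adm (fun n => rowSum p n (c' n)) (fun n => p n (c' n)) :=
    adm_of m p c' hpnn hp2 hcv'
  have hpc : ∀ t, 0 < p t (c t) := fun t => hppos t (c t) (hcv t)
  have hpc' : ∀ t, 0 < p t (c' t) := fun t => hppos t (c' t) (hcv' t)
  have hqc : ∀ t, 0 < q t (c t) := fun t => hq1 t (c t) (hcv t)
  have hne : ∃ t, 1 ≤ t ∧ c t ≠ c' t := by
    by_contra hcon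
    push_neg at hcon
    exact absurd (shval_congr 0 (fun t ht => by rw [hcon t ht]; exact ⟨rfl, rfl⟩)) hlt.ne
  obtain ⟨n, ⟨hn1, hnne⟩, hmin0⟩ : ∃ n, (1 ≤ n ∧ c n ≠ c' n) ∧
      ∀ t, t < n → ¬(1 ≤ t ∧ c t ≠ c' t) :=
    ⟨Nat.find hne, Nat.find_spec hne, fun t ht => Nat.find_min hne ht⟩
  have hmin : ∀ t, t < n → 1 ≤ t → c t = c' t := by
    intro t ht h1
    have := hmin0 t ht
    push_neg at this
    exact this h1
  have hag : ∀ t, 0 < t → t < n →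
      rowSum q t (c t) = rowSum q t (c' t) ∧ q t (c t) = q t (c' t) := by
    intro t ht htn
    rw [hmin t htn ht]
    exact ⟨rfl, rfl⟩
  have hagp : ∀ t, 0 < t → t < n →
      rowSum p t (c t) = rowSum p t (c' t) ∧ p t (c t) = p t (c' t) := by
    intro t ht htn
    rw [hmin t htn ht]
    exact ⟨rfl, rfl⟩
  have horder : c n < c' n := by
    by_contra hcon
    push_neg at hcon
    have h2 : c' n < c n := lt_of_le_of_ne hcon (fun h => hnne h.symm)
    have hchain : rowSum q n (c' n) + q n (c' n) *
        shval (fun t => rowSum q t (c' t)) (fun t => q t (c' t)) n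
        ≤ rowSum q n (c n) + q n (c n) *
        shval (fun t => rowSum q t (c t)) (fun t => q t (c t)) n :=
      chain_le (fun j hj => (hq1 n j hj).le) h2 (hcv n)
        (shval_nonneg Hq' n) (shval_le_one Hq' n) (shval_nonneg Hq n)
    exact absurd (shval_le Hq' Hq hn1
      (fun t ht htn => ⟨(hag t ht htn).1.symm, (hag t ht htn).2.symm⟩)
      hchain) (not_le.mpr hlt)
  -- p-side tail values at position n
  have hSp0 := shval_nonneg Hp n
  have hSp1 := shval_le_one Hp n
  have hSp0' := shval_nonneg Hp' n
  have hSp1' := shval_le_one Hp' n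
  rcases Nat.lt_or_ge (c n + 1) (c' n) with hA | hB
  · -- the digit gap is at least 2: strictness from strictly increasing rowSum
    apply shval_lt Hp Hp' hpc hn1 hagp
    have h1 : rowSum p n (c n) + p n (c n) *
        shval (fun t => rowSum p t (c t)) (fun t => p t (c t)) n
        ≤ rowSum p n (c n + 1) := by
      rw [rowSum_succ]
      nlinarith [hpc n]
    have h2 : rowSum p n (c n + 1) < rowSum p n (c' n) :=
      rowSum_lt_rowSum (fun j hj => hppos n j hj) hA (by have := hcv' n; omega)
    have h3 : 0 ≤ p n (c' n) *
        shval (fun t => rowSum p t (c' t)) (fun t => p t (c' t)) n :=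
      mul_nonneg (hpc' n).le hSp0'
    linarith
  · -- adjacent digits: c' n = c n + 1
    have hB' : c' n = c n + 1 := by omega
    have hnot : shval (fun t => rowSum q t (c t)) (fun t => q t (c t)) n < 1 ∨
        0 < shval (fun t => rowSum q t (c' t)) (fun t => q t (c' t)) n := by
      by_contra hcon
      push_neg at hcon
      obtain ⟨h1, h0⟩ := hcon
      have he1 : shval (fun t => rowSum q t (c t)) (fun t => q t (c t)) n = 1 :=
        le_antisymm (shval_le_one Hq n) h1
      have he0 : shval (fun t => rowSum q t (c' t)) (fun t => q t (c' t)) n = 0 :=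
        le_antisymm h0 (shval_nonneg Hq' n)
      have hchain : rowSum q n (c' n) + q n (c' n) *
          shval (fun t => rowSum q t (c' t)) (fun t => q t (c' t)) n
          ≤ rowSum q n (c n) + q n (c n) *
          shval (fun t => rowSum q t (c t)) (fun t => q t (c t)) n := by
        rw [he1, he0, hB', rowSum_succ]
        ring_nf
        simp
      exact absurd (shval_le Hq' Hq hn1
        (fun t ht htn => ⟨(hag t ht htn).1.symm, (hag t ht htn).2.symm⟩)
        hchain) (not_le.mpr hlt)
    apply shval_lt Hp Hp' hpc hn1 hagp
    rcases hnot with hS | hS'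
    · -- tail of `c` after `n` is not all-maximal
      have hex : ∃ t, n < t ∧ rowSum q t (c t) + q t (c t) < 1 := by
        by_contra hcon
        push_neg at hcon
        have hall : ∀ t, n < t → rowSum q t (c t) + q t (c t) = 1 :=
          fun t ht => le_antisymm (Hq t).2.2 (hcon t ht)
        have := shval_eq_one Hq n hall (prod_shift_tendsto _ hqc (hq4 c hcv) n)
        exact absurd this (ne_of_lt hS)
      obtain ⟨t, hnt, hlt1⟩ := hex
      have hctm : c t < m t := by
        rcases Nat.lt_or_ge (c t) (m t) with h | h
        · exact h
        · exfalso
          have hct : c t = m t := le_antisymm (hcv t) h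
          rw [hct, ← rowSum_succ] at hlt1
          have : rowSum q t (m t + 1) = 1 := hq2 t
          linarith
      have hp_lt1 : rowSum p t (c t) + p t (c t) < 1 := by
        rw [← rowSum_succ]
        exact (hp3 t (c t + 1) (by omega) (by omega)).2
      have hSp : shval (fun t => rowSum p t (c t)) (fun t => p t (c t)) n < 1 :=
        shval_lt_one Hp hpc hnt hp_lt1
      have h1 : rowSum p n (c n) + p n (c n) *
          shval (fun t => rowSum p t (c t)) (fun t => p t (c t)) n
          < rowSum p n (c n + 1) := by
        rw [rowSum_succ]
        nlinarith [hpc n]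
      have h3 : 0 ≤ p n (c' n) *
          shval (fun t => rowSum p t (c' t)) (fun t => p t (c' t)) n :=
        mul_nonneg (hpc' n).le hSp0'
      rw [hB'] at h3 ⊢
      linarith
    · -- tail of `c'` after `n` is not all-zero
      have hex : ∃ t, n < t ∧ rowSum q t (c' t) ≠ 0 := by
        by_contra hcon
        push_neg at hcon
        have := shval_eq_zero (B := fun t => rowSum q t (c' t))
          (a := fun t => q t (c' t)) n hcon
        exact absurd this (ne_of_gt hS')
      obtain ⟨t, hnt, hne0⟩ := hex
      have hct : 1 ≤ c' t := by
        by_contra h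
        push_neg at h
        have h0 : c' t = 0 := by omega
        apply hne0
        rw [h0]
        simp [rowSum]
      have hBp' : 0 < rowSum p t (c' t) := (hp3 t (c' t) hct (hcv' t)).1
      have hSp' : 0 < shval (fun t => rowSum p t (c' t)) (fun t => p t (c' t)) n :=
        shval_pos Hp' hpc' hnt hBp'
      have h1 : rowSum p n (c n) + p n (c n) *
          shval (fun t => rowSum p t (c t)) (fun t => p t (c t)) n
          ≤ rowSum p n (c n + 1) := by
        rw [rowSum_succ]
        nlinarith [hpc n]
      have h2 : 0 < p n (c' n) *
          shval (fun t => rowSum p t (c' t)) (fun t => p t (c' t)) n :=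
        mul_pos (hpc' n) hSp'
      rw [hB'] at h2 ⊢
      linarith

/-- if all `p_{i,n} ≥ 0` then `F` is nondecreasing on `[0,1]`;
if all `p_{i,n} > 0` then `F` is strictly increasing on `[0,1]`. -/
theorem stmt6 (m : ℕ → ℕ) (q p : ℕ → ℕ → ℝ)
    (hq1 : ∀ n i, i ≤ m n → 0 < q n i)
    (hq2 : ∀ n, ∑ i ∈ Finset.range (m n + 1), q n i = 1)
    (hq4 : ∀ d, ValidDigits m d →
      Tendsto (fun N => ∏ j ∈ Finset.Icc 1 N, q j (d j)) atTop (𝓝 0))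
    (hp1 : ∀ n i, i ≤ m n → p n i ∈ Set.Ioo (-1 : ℝ) 1)
    (hp2 : ∀ n, ∑ i ∈ Finset.range (m n + 1), p n i = 1)
    (hp3 : ∀ n k, 1 ≤ k → k ≤ m n → rowSum p n k ∈ Set.Ioo (0 : ℝ) 1)
    (hp4 : ∀ d, ValidDigits m d →
      Tendsto (fun N => ∏ j ∈ Finset.Icc 1 N, |p j (d j)|) atTop (𝓝 0))
    (G : ℝ → ℝ)
    (hG : ∀ d, ValidDigits m d → G (negaVal m q d) = negaVal m p d)
    (hsurj : ∀ x ∈ Set.Icc (0 : ℝ) 1, ∃ d, ValidDigits m d ∧ x = negaVal m q d) :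
    ((∀ n i, i ≤ m n → 0 ≤ p n i) → MonotoneOn G (Set.Icc (0 : ℝ) 1)) ∧
    ((∀ n i, i ≤ m n → 0 < p n i) → StrictMonoOn G (Set.Icc (0 : ℝ) 1)) := by
  constructor
  · intro hpnn x hx y hy hxy
    rcases eq_or_lt_of_le hxy with heq | hlt
    · rw [heq]
    · obtain ⟨d, hd, hxd⟩ := hsurj x hx
      obtain ⟨e, he, hye⟩ := hsurj y hy
      subst hxd
      subst hye
      rw [hG d hd, hG e he]
      exact key_le m q p hq1 hp2 hq2 hpnn hd he hlt
  · intro hppos x hx y hy hxy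
    obtain ⟨d, hd, hxd⟩ := hsurj x hx
    obtain ⟨e, he, hye⟩ := hsurj y hy
    subst hxd
    subst hye
    rw [hG d hd, hG e he]
    exact key_lt m q p hq1 hq2 hq4 hp2 hp3 hppos hd he hxy
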